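/- Let the prior be a full exponential family p(θ|α) = exp(αᵀθ − A(α))h(θ) with natural parameter α and log-normalizer A. With log-perturbation ρ(θ,α) = log p(x|θ) + log p(θ|α) − log p(x|θ) − log p(θ|α₀) = (α−α₀)ᵀθ − A(α) + A(α₀), the mixed derivative f_{αη} = ∂/∂ηᵀ E_{q(θ;η)}[∂ρ/∂α|_{α₀}] equals g_η = ∂/∂ηᵀ E_{q(θ;η)}[θ], since ∂A(α)/∂α|_{α₀} does not depend on η. Hence the variational prior sensitivity S^q_{α₀} = g_η H⁻¹ f_{αη}ᵀ coincides with the linear response covariance Cov^{LR}(θ) = g_η H⁻¹ g_ηᵀ. -/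

import Mathlib

open Matrix

lemma dot_shift_hasFDerivAt {K : ℕ} (α₀ c : Fin K → ℝ) :
    HasFDerivAt (fun α : Fin K → ℝ => (fun k => α k - α₀ k) ⬝ᵥ c)
      (∑ k, c k • (ContinuousLinearMap.proj k : (Fin K → ℝ) →L[ℝ] ℝ)) α₀ := by
  simp only [dotProduct]
  exact HasFDerivAt.fun_sum fun k _ =>
    ((hasFDerivAt_apply k α₀).sub_const (α₀ k)).mul_const (c k)

lemma inner_fderiv_eq {K : ℕ} (α₀ c : Fin K → ℝ) (A : (Fin K → ℝ) → ℝ)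
    (hA : DifferentiableAt ℝ A α₀) (i : Fin K) :
    fderiv ℝ (fun α => (fun k => α k - α₀ k) ⬝ᵥ c - A α + A α₀) α₀
      (Pi.single i 1) = c i - fderiv ℝ A α₀ (Pi.single i 1) := by
  have h := (((dot_shift_hasFDerivAt α₀ c).fun_sub hA.hasFDerivAt).add_const (A α₀))
  rw [h.fderiv]
  simp [ContinuousLinearMap.sum_apply, Pi.single_apply,
    Finset.sum_ite_eq' (Finset.univ : Finset (Fin K)) i]

/-- With an exponential-family prior perturbation
`ρ(θ,α) = (α−α₀)ᵀθ − A(α) + A(α₀)` (natural sufficient statistic `θ`), the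
mixed derivative `f_{αη}` of `η ↦ E_{q(θ;η)}[∂ρ/∂α|_{α₀}]` equals
`g_η = ∂E_{q(θ;η)}[θ]/∂ηᵀ`, so the variational prior sensitivity
`g_η H⁻¹ f_{αη}ᵀ` coincides with the LRVB covariance `g_η H⁻¹ g_ηᵀ`. -/
theorem prior_sensitivity_equals_lrvb_covariance
    {K Kη : ℕ}
    (Eq : (Fin Kη → ℝ) → (Fin K → ℝ))  -- `η ↦ E_{q(θ;η)}[θ]`
    (η₀ : Fin Kη → ℝ) (α₀ : Fin K → ℝ)
    (A : (Fin K → ℝ) → ℝ) (hA : DifferentiableAt ℝ A α₀)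
    (hEq : ∀ i, DifferentiableAt ℝ (fun η => Eq η i) η₀)
    (H : Matrix (Fin Kη) (Fin Kη) ℝ) (hH : H.PosDef)
    (gη : Matrix (Fin K) (Fin Kη) ℝ)
    (hgη : ∀ i j, gη i j = fderiv ℝ (fun η => Eq η i) η₀ (Pi.single j 1))
    (f : Matrix (Fin K) (Fin Kη) ℝ)
    (hf : ∀ i j, f i j =
      fderiv ℝ (fun η =>
          fderiv ℝ (fun α => (fun k => α k - α₀ k) ⬝ᵥ Eq η - A α + A α₀)
            α₀ (Pi.single i 1))
        η₀ (Pi.single j 1)) :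
    f = gη ∧ gη * H⁻¹ * fᵀ = gη * H⁻¹ * gηᵀ := by
  have hfg : f = gη := by
    ext i j
    rw [hf i j, hgη i j]
    have hcongr : (fun η =>
        fderiv ℝ (fun α => (fun k => α k - α₀ k) ⬝ᵥ Eq η - A α + A α₀)
          α₀ (Pi.single i 1))
        = fun η => Eq η i - fderiv ℝ A α₀ (Pi.single i 1) := by
      funext η
      exact inner_fderiv_eq α₀ (Eq η) A hA i
    rw [hcongr, fderiv_sub_const]
  exact ⟨hfg, by rw [hfg]⟩
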